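/- Let A, B be real symmetric n×n matrices with B nonsingular. Then A and B are simultaneously diagonalizable via congruence if and only if there exists a nonsingular real matrix P such that P⁻¹B⁻¹AP is a real diagonal matrix. -/

import Mathlib

open Matrix

set_option maxHeartbeats 1000000

open Module.End in
/-- Two commuting real symmetric matrices are simultaneously orthogonally diagonalizable. -/
lemma joint_diag_aux {n : ℕ} (M D : Matrix (Fin n) (Fin n) ℝ) (hM : M.IsSymm) (hD : D.IsSymm)
    (hcomm : M * D = D * M) :
    ∃ Q : Matrix (Fin n) (Fin n) ℝ, Qᵀ * Q = 1 ∧ (Qᵀ * M * Q).IsDiag ∧ (Qᵀ * D * Q).IsDiag := by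
  classical
  have key : ∀ X Y : Matrix (Fin n) (Fin n) ℝ,
      Matrix.toEuclideanLin (X * Y) = Matrix.toEuclideanLin X * Matrix.toEuclideanLin Y := by
    intro X Y
    rw [toEuclideanLin_eq_toLin, Matrix.toLin_mul _ (PiLp.basisFun 2 ℝ (Fin n)) _]
    rfl
  have hMh : M.IsHermitian := by rwa [Matrix.IsHermitian, conjTranspose_eq_transpose_of_trivial]
  have hDh : D.IsHermitian := by rwa [Matrix.IsHermitian, conjTranspose_eq_transpose_of_trivial]
  have hLM : (Matrix.toEuclideanLin M).IsSymmetric := Matrix.isHermitian_iff_isSymmetric.mp hMh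
  have hLD : (Matrix.toEuclideanLin D).IsSymmetric := Matrix.isHermitian_iff_isSymmetric.mp hDh
  have hC : Commute (Matrix.toEuclideanLin M) (Matrix.toEuclideanLin D) := by
    unfold Commute SemiconjBy
    rw [← key, ← key, hcomm]
  set V : ℝ × ℝ → Submodule ℝ (EuclideanSpace ℝ (Fin n)) :=
    fun i => eigenspace (Matrix.toEuclideanLin M) i.2 ⊓ eigenspace (Matrix.toEuclideanLin D) i.1
    with hV
  have internal : DirectSum.IsInternal V :=
    LinearMap.IsSymmetric.directSum_isInternal_of_commute hLM hLD hC
  have orth : OrthogonalFamily ℝ (fun i => V i) (fun i => (V i).subtypeₗᵢ) :=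
    LinearMap.IsSymmetric.orthogonalFamily_eigenspace_inf_eigenspace hLM hLD
  -- restrict to the (finitely many) nontrivial joint eigenspaces
  have hindep : iSupIndep V :=
    ((DirectSum.isInternal_submodule_iff_iSupIndep_and_iSup_eq_top V).mp internal).1
  haveI : Fintype {i : ℝ × ℝ // V i ≠ ⊥} := hindep.fintypeNeBotOfFiniteDimensional
  have internal' : DirectSum.IsInternal (fun i : {i : ℝ × ℝ // V i ≠ ⊥} => V i) :=
    DirectSum.isInternal_ne_bot_iff.mpr internal
  have orth' : OrthogonalFamily ℝ (fun i : {i : ℝ × ℝ // V i ≠ ⊥} => V i)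
      (fun i => (V i).subtypeₗᵢ) :=
    fun i j hij => orth (fun h => hij (Subtype.ext h))
  have hn : Module.finrank ℝ (EuclideanSpace ℝ (Fin n)) = n := finrank_euclideanSpace_fin
  let b := internal'.subordinateOrthonormalBasis hn orth'
  have hb := orthonormal_iff_ite.mp b.orthonormal
  set μ : Fin n → ℝ × ℝ := fun j => (internal'.subordinateOrthonormalBasisIndex hn j orth').val
    with hμ
  have hmem : ∀ j : Fin n, b j ∈ V (μ j) :=
    fun j => internal'.subordinateOrthonormalBasis_subordinate hn j orth'
  refine ⟨Matrix.of (fun i j => b j i), ?_, ?_, ?_⟩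
  · ext i j
    have := hb i j
    simp only [PiLp.inner_apply, RCLike.inner_apply, starRingEnd_apply, star_trivial] at this
    simp [Matrix.mul_apply, Matrix.one_apply, ← this, mul_comm]
  · intro i j hij
    have hM' : Matrix.toEuclideanLin M (b j) = (μ j).2 • b j := mem_eigenspace_iff.mp (hmem j).1
    have hM'' : M *ᵥ (b j : Fin n → ℝ) = (μ j).2 • (b j : Fin n → ℝ) := by
      have := congrArg (WithLp.equiv 2 (Fin n → ℝ)) hM'
      simpa using this
    have hinner := hb i j
    simp only [PiLp.inner_apply, RCLike.inner_apply, starRingEnd_apply, star_trivial,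
      if_neg hij] at hinner
    have hMQ : ∀ k, (M * Matrix.of (fun i j => b j i)) k j = (μ j).2 * b j k := by
      intro k
      simp only [Matrix.mul_apply, Matrix.of_apply]
      calc (∑ l, M k l * b j l) = (M *ᵥ (b j : Fin n → ℝ)) k := by
            simp [Matrix.mulVec, dotProduct]
        _ = (μ j).2 * b j k := by rw [hM'']; simp
    rw [Matrix.mul_assoc, Matrix.mul_apply]
    simp only [Matrix.transpose_apply, Matrix.of_apply, hMQ]
    calc (∑ k, b i k * ((μ j).2 * b j k)) = (μ j).2 * ∑ k, b i k * b j k := by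
          rw [Finset.mul_sum]; congr 1; ext k; ring
      _ = 0 := by rw [Finset.sum_congr rfl (fun k _ => mul_comm (b i k) (b j k)), hinner, mul_zero]
  · intro i j hij
    have hD' : Matrix.toEuclideanLin D (b j) = (μ j).1 • b j := mem_eigenspace_iff.mp (hmem j).2
    have hD'' : D *ᵥ (b j : Fin n → ℝ) = (μ j).1 • (b j : Fin n → ℝ) := by
      have := congrArg (WithLp.equiv 2 (Fin n → ℝ)) hD'
      simpa using this
    have hinner := hb i j
    simp only [PiLp.inner_apply, RCLike.inner_apply, starRingEnd_apply, star_trivial,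
      if_neg hij] at hinner
    have hDQ : ∀ k, (D * Matrix.of (fun i j => b j i)) k j = (μ j).1 * b j k := by
      intro k
      simp only [Matrix.mul_apply, Matrix.of_apply]
      calc (∑ l, D k l * b j l) = (D *ᵥ (b j : Fin n → ℝ)) k := by
            simp [Matrix.mulVec, dotProduct]
        _ = (μ j).1 * b j k := by rw [hD'']; simp
    rw [Matrix.mul_assoc, Matrix.mul_apply]
    simp only [Matrix.transpose_apply, Matrix.of_apply, hDQ]
    calc (∑ k, b i k * ((μ j).1 * b j k)) = (μ j).1 * ∑ k, b i k * b j k := by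
          rw [Finset.mul_sum]; congr 1; ext k; ring
      _ = 0 := by rw [Finset.sum_congr rfl (fun k _ => mul_comm (b i k) (b j k)), hinner, mul_zero]

/-- For symmetric A, B with B nonsingular, A and B are SDC iff there is a nonsingular P
with P⁻¹B⁻¹AP real diagonal. -/
theorem sdc_iff_similar_diagonal {n : ℕ} (A B : Matrix (Fin n) (Fin n) ℝ)
    (hA : A.IsSymm) (hB : B.IsSymm) (hBinv : IsUnit B.det) :
    (∃ P : Matrix (Fin n) (Fin n) ℝ, IsUnit P.det ∧
      (Pᵀ * A * P).IsDiag ∧ (Pᵀ * B * P).IsDiag) ↔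
    (∃ P : Matrix (Fin n) (Fin n) ℝ, IsUnit P.det ∧
      (P⁻¹ * B⁻¹ * A * P).IsDiag) := by
  have hkey : ∀ P : Matrix (Fin n) (Fin n) ℝ, IsUnit P.det →
      (Pᵀ * B * P) * (P⁻¹ * B⁻¹ * A * P) = Pᵀ * A * P := by
    intro P hP
    simp only [Matrix.mul_assoc]
    rw [← Matrix.mul_assoc P P⁻¹, Matrix.mul_nonsing_inv _ hP, Matrix.one_mul,
      ← Matrix.mul_assoc B B⁻¹, Matrix.mul_nonsing_inv _ hBinv, Matrix.one_mul]
  constructor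
  · rintro ⟨P, hP, hAdiag, hBdiag⟩
    refine ⟨P, hP, ?_⟩
    have hPT : IsUnit Pᵀ.det := by rwa [Matrix.det_transpose]
    have hD2 : IsUnit (Pᵀ * B * P).det := by
      rw [Matrix.det_mul, Matrix.det_mul]
      exact (hPT.mul hBinv).mul hP
    have heq : P⁻¹ * B⁻¹ * A * P = (Pᵀ * B * P)⁻¹ * (Pᵀ * A * P) := by
      have := congrArg (fun X => (Pᵀ * B * P)⁻¹ * X) (hkey P hP)
      simpa [← Matrix.mul_assoc, Matrix.nonsing_inv_mul _ hD2] using this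
    rw [heq, ← hBdiag.diagonal_diag, ← hAdiag.diagonal_diag, Matrix.inv_diagonal,
      Matrix.diagonal_mul_diagonal]
    exact Matrix.isDiag_diagonal _
  · rintro ⟨P, hP, hdiag⟩
    set D₀ := P⁻¹ * B⁻¹ * A * P with hD₀
    set M := Pᵀ * B * P with hMdef
    have hMsymm : M.IsSymm := by
      rw [Matrix.IsSymm, hMdef, Matrix.transpose_mul, Matrix.transpose_mul,
        Matrix.transpose_transpose, hB.eq, Matrix.mul_assoc]
    have hMD : M * D₀ = Pᵀ * A * P := hkey P hP
    have hMDsymm : (M * D₀).IsSymm := by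
      rw [hMD, Matrix.IsSymm, Matrix.transpose_mul, Matrix.transpose_mul,
        Matrix.transpose_transpose, hA.eq, Matrix.mul_assoc]
    have hcomm : M * D₀ = D₀ * M := by
      conv_lhs => rw [← hMDsymm.eq]
      rw [Matrix.transpose_mul, hMsymm.eq, hdiag.isSymm.eq]
    obtain ⟨Q, hQ, hQM, hQMD⟩ := joint_diag_aux M D₀ hMsymm hdiag.isSymm hcomm
    have hQQ : Q * Qᵀ = 1 := mul_eq_one_comm.mp hQ
    have hQdet : IsUnit Q.det := by
      have h1 : Q.det * Q.det = 1 := by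
        have := congrArg Matrix.det hQ
        rwa [Matrix.det_mul, Matrix.det_transpose, Matrix.det_one] at this
      exact IsUnit.of_mul_eq_one _ h1
    refine ⟨P * Q, by rw [Matrix.det_mul]; exact hP.mul hQdet, ?_, ?_⟩
    · have heq : (P * Q)ᵀ * A * (P * Q) = (Qᵀ * M * Q) * (Qᵀ * D₀ * Q) := by
        rw [Matrix.transpose_mul]
        calc Qᵀ * Pᵀ * A * (P * Q) = Qᵀ * (Pᵀ * A * P) * Q := by
              simp only [Matrix.mul_assoc]
          _ = Qᵀ * (M * D₀) * Q := by rw [hMD]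
          _ = (Qᵀ * M * Q) * (Qᵀ * D₀ * Q) := by
              simp only [Matrix.mul_assoc]
              rw [← Matrix.mul_assoc Q Qᵀ, hQQ, Matrix.one_mul]
      rw [heq, ← hQM.diagonal_diag, ← hQMD.diagonal_diag, Matrix.diagonal_mul_diagonal]
      exact Matrix.isDiag_diagonal _
    · have heq : (P * Q)ᵀ * B * (P * Q) = Qᵀ * M * Q := by
        rw [Matrix.transpose_mul, hMdef]
        simp only [Matrix.mul_assoc]
      rw [heq]; exact hQM
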